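/- Let X be a topological space with a countable network, such that both the cardinality of X and the weight of X are strictly less than the bounding number 𝔟. Then X is H-nw-selective: for every sequence (𝒩ₙ : n ∈ ω) of countable networks for X, one can select finite ℱₙ ⊆ 𝒩ₙ such that for every x ∈ X and every open neighborhood U of x, there exists κ ∈ ω such that for all n ≥ κ some A ∈ ℱₙ satisfies x ∈ A ⊆ U. -/

import Mathlib

open Set Filter Topology TopologicalSpace

def IsNetwork (X : Type) [TopologicalSpace X] (N : Set (Set X)) : Prop :=
  ∀ (x : X) (U : Set X), IsOpen U → x ∈ U → ∃ A ∈ N, x ∈ A ∧ A ⊆ U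

def IsNetworkAt (X : Type) [TopologicalSpace X] (N : Set (Set X)) (x : X) : Prop :=
  ∀ U : Set X, IsOpen U → x ∈ U → ∃ A ∈ N, x ∈ A ∧ A ⊆ U

def HasCountableNetwork (X : Type) [TopologicalSpace X] : Prop :=
  ∃ N : Set (Set X), N.Countable ∧ IsNetwork X N

def MNwSelective (X : Type) [TopologicalSpace X] : Prop :=
  HasCountableNetwork X ∧
  ∀ N : ℕ → Set (Set X), (∀ n, (N n).Countable ∧ IsNetwork X (N n)) →
    ∃ F : ℕ → Set (Set X), (∀ n, F n ⊆ N n ∧ (F n).Finite) ∧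
      IsNetwork X (⋃ n, F n)

def RNwSelective (X : Type) [TopologicalSpace X] : Prop :=
  HasCountableNetwork X ∧
  ∀ N : ℕ → Set (Set X), (∀ n, (N n).Countable ∧ IsNetwork X (N n)) →
    ∃ s : ℕ → Set X, (∀ n, s n ∈ N n) ∧ IsNetwork X (Set.range s)

def HNwSelective (X : Type) [TopologicalSpace X] : Prop :=
  HasCountableNetwork X ∧
  ∀ N : ℕ → Set (Set X), (∀ n, (N n).Countable ∧ IsNetwork X (N n)) →
    ∃ F : ℕ → Set (Set X), (∀ n, F n ⊆ N n ∧ (F n).Finite) ∧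
      ∀ (x : X) (U : Set X), IsOpen U → x ∈ U →
        ∃ k : ℕ, ∀ n ≥ k, ∃ A ∈ F n, x ∈ A ∧ A ⊆ U

noncomputable def dominatingNumber : Cardinal :=
  sInf {c | ∃ D : Set (ℕ → ℕ), Cardinal.mk D = c ∧
    ∀ g : ℕ → ℕ, ∃ f ∈ D, ∀ᶠ n in atTop, g n ≤ f n}

noncomputable def boundingNumber : Cardinal :=
  sInf {c | ∃ B : Set (ℕ → ℕ), Cardinal.mk B = c ∧
    ∀ g : ℕ → ℕ, ∃ f ∈ B, ¬ (∀ᶠ n in atTop, f n ≤ g n)}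

noncomputable def covMeager : Cardinal :=
  sInf {c | ∃ S : Set (Set ℝ), Cardinal.mk S = c ∧ (∀ s ∈ S, IsMeagre s) ∧ ⋃₀ S = Set.univ}

noncomputable def weight' (X : Type) [TopologicalSpace X] : Cardinal :=
  sInf {c | ∃ B : Set (Set X), Cardinal.mk B = c ∧ TopologicalSpace.IsTopologicalBasis B}


lemma aleph0_le_boundingNumber : Cardinal.aleph0 ≤ boundingNumber := by
  apply le_csInf
  · refine ⟨_, Set.univ, rfl, fun g => ⟨fun n => g n + 1, trivial, ?_⟩⟩
    intro h
    obtain ⟨n, hn⟩ := h.exists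
    exact Nat.not_succ_le_self _ hn
  · rintro c ⟨D, rfl, hD⟩
    by_contra hlt
    push_neg at hlt
    have hfin : D.Finite := by rwa [Cardinal.lt_aleph0_iff_set_finite] at hlt
    obtain ⟨f, hfD, hf⟩ := hD (fun n => hfin.toFinset.sup (fun h => h n))
    have hle : ∀ n, f n ≤ hfin.toFinset.sup (fun h => h n) :=
      fun n => Finset.le_sup (f := fun h => h n) (hfin.mem_toFinset.mpr hfD)
    exact hf (Filter.Eventually.of_forall hle)

lemma bounded_of_lt_boundingNumber (D : Set (ℕ → ℕ))
    (h : Cardinal.mk D < boundingNumber) :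
    ∃ g : ℕ → ℕ, ∀ f ∈ D, ∀ᶠ n in atTop, f n ≤ g n := by
  by_contra hc
  push_neg at hc
  have hmem : Cardinal.mk D ∈ {c | ∃ B : Set (ℕ → ℕ), Cardinal.mk B = c ∧
      ∀ g : ℕ → ℕ, ∃ f ∈ B, ¬ (∀ᶠ n in atTop, f n ≤ g n)} := ⟨D, rfl, fun g => by
        obtain ⟨f, hf, h'⟩ := hc g
        exact ⟨f, hf, by rw [Filter.not_eventually]; simpa [not_le] using h'⟩⟩
  have : boundingNumber ≤ Cardinal.mk D := csInf_le' hmem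
  exact absurd this (not_le.mpr h)


theorem stmt2 (X : Type) [TopologicalSpace X]
    (h1 : HasCountableNetwork X)
    (h2 : Cardinal.mk X < boundingNumber)
    (h3 : weight' X < boundingNumber) :
    HNwSelective X := by
  classical
  refine ⟨h1, fun N hN => ?_⟩
  rcases isEmpty_or_nonempty X with hX | hX
  · exact ⟨fun _ => ∅, fun n => ⟨empty_subset _, Set.finite_empty⟩,
      fun x => (IsEmpty.false x).elim⟩
  -- get a basis of cardinality weight'
  obtain ⟨B, hBmk, hBbasis⟩ :
      ∃ B : Set (Set X), Cardinal.mk B = weight' X ∧ IsTopologicalBasis B := by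
    have hne : {c | ∃ B : Set (Set X), Cardinal.mk B = c ∧
        TopologicalSpace.IsTopologicalBasis B}.Nonempty :=
      ⟨_, {U : Set X | IsOpen U}, rfl, isTopologicalBasis_opens⟩
    have := csInf_mem hne
    obtain ⟨B, hB1, hB2⟩ := this
    exact ⟨B, hB1, hB2⟩
  have hBlt : Cardinal.mk B < boundingNumber := hBmk ▸ h3
  -- enumerate each network
  have hNe : ∀ n, (N n).Nonempty := by
    intro n
    obtain ⟨A, hA, _⟩ := (hN n).2 (Classical.arbitrary X) Set.univ isOpen_univ trivial
    exact ⟨A, hA⟩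
  have hEnum : ∀ n, ∃ f : ℕ → Set X, N n = Set.range f :=
    fun n => ((hN n).1).exists_eq_range (hNe n)
  choose e he using hEnum
  -- index set of (point, basic open) pairs
  let P := {p : X × Set X // p.2 ∈ B ∧ p.1 ∈ p.2}
  have hfind : ∀ p : P, ∀ n : ℕ, ∃ i : ℕ, p.1.1 ∈ e n i ∧ e n i ⊆ p.1.2 := by
    intro p n
    obtain ⟨A, hA, hxA, hAU⟩ := (hN n).2 p.1.1 p.1.2 (hBbasis.isOpen p.2.1) p.2.2
    rw [he n] at hA
    obtain ⟨i, rfl⟩ := hA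
    exact ⟨i, hxA, hAU⟩
  choose fF hf1 hf2 using hfind
  -- cardinality bound
  have hPle : Cardinal.mk P ≤ Cardinal.mk (X × B) := by
    apply Cardinal.mk_le_of_injective (f := fun p : P => ((p.1.1, ⟨p.1.2, p.2.1⟩) : X × B))
    rintro ⟨⟨x, U⟩, hU, hx⟩ ⟨⟨y, V⟩, hV, hy⟩ h
    simp only [Prod.mk.injEq, Subtype.mk.injEq] at h
    simp [Prod.ext_iff, h.1, h.2]
  have hXB : Cardinal.mk (X × B) < boundingNumber := by
    rw [Cardinal.mk_prod, Cardinal.lift_id, Cardinal.lift_id]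
    exact Cardinal.mul_lt_of_lt aleph0_le_boundingNumber h2 hBlt
  have hDlt : Cardinal.mk (Set.range fF) < boundingNumber :=
    lt_of_le_of_lt (Cardinal.mk_range_le.trans hPle) hXB
  obtain ⟨g, hg⟩ := bounded_of_lt_boundingNumber _ hDlt
  refine ⟨fun n => e n '' {i | i ≤ g n}, fun n => ⟨?_, (Set.finite_Iic (g n)).image _⟩, ?_⟩
  · rw [he n]
    exact Set.image_subset_range _ _
  · intro x U hU hxU
    obtain ⟨V, hVB, hxV, hVU⟩ := hBbasis.exists_subset_of_mem_open hxU hU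
    set p : P := ⟨(x, V), hVB, hxV⟩
    have := hg (fF p) ⟨p, rfl⟩
    rw [Filter.eventually_atTop] at this
    obtain ⟨k, hk⟩ := this
    exact ⟨k, fun n hn => ⟨e n (fF p n), ⟨fF p n, hk n hn, rfl⟩, hf1 p n,
      (hf2 p n).trans hVU⟩⟩
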